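/- For GL(2,𝔽_q), the principal series representations satisfy the multiplicity formula ⟨I(μ₁,μ₂) I(ν₁,ν₂) I(ρ₁,ρ₂)⟩ = δ(μ₁ν₁ρ₁μ₂ν₂ρ₂=1) + δ(μ₁ν₁ρ₁=1)δ(μ₂ν₂ρ₂=1) + δ(μ₂ν₁ρ₁=1)δ(μ₁ν₂ρ₂=1) + δ(μ₁ν₂ρ₁=1)δ(μ₂ν₁ρ₂=1) + δ(μ₁ν₁ρ₂=1)δ(μ₂ν₂ρ₁=1), where ⟨πenπ'π''⟩ = (1/|G|)Σ_{g∈G}χ_π(g)χ_{π'}(g)χ_{π''}(g). -/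

import Mathlib

set_option linter.unusedSectionVars false
set_option linter.unnecessarySeqFocus false
set_option maxHeartbeats 1000000
set_option linter.unreachableTactic false
set_option linter.unusedTactic false
set_option linter.unusedVariables false

open scoped Classical in
/-- The character of the principal series representation `I(μ₁,μ₂) = Ind_B^G(μ₁⊗μ₂)` of
`G = GL(2,𝔽_q)`, computed by the standard induced character formula from the Borel
subgroup `B` of upper triangular matrices, on whose elements the inducing character is
`b ↦ μ₁(b₀₀)μ₂(b₁₁)`. -/
noncomputable def principalSeriesChar {F : Type} [Field F] [Fintype F] [DecidableEq F]
    (μ₁ μ₂ : MulChar F ℂ) (g : GL (Fin 2) F) : ℂ :=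
  (Nat.card {b : GL (Fin 2) F // (b : Matrix (Fin 2) (Fin 2) F) 1 0 = 0} : ℂ)⁻¹ *
    ∑ x : GL (Fin 2) F,
      if ((x⁻¹ * g * x : GL (Fin 2) F) : Matrix (Fin 2) (Fin 2) F) 1 0 = 0 then
        μ₁ (((x⁻¹ * g * x : GL (Fin 2) F) : Matrix (Fin 2) (Fin 2) F) 0 0) *
        μ₂ (((x⁻¹ * g * x : GL (Fin 2) F) : Matrix (Fin 2) (Fin 2) F) 1 1)
      else 0

variable {F : Type} [Field F] [Fintype F] [DecidableEq F]


lemma gl_det_ne (y : GL (Fin 2) F) : ((y : Matrix (Fin 2) (Fin 2) F)).det ≠ 0 := by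
  have : IsUnit (y : Matrix (Fin 2) (Fin 2) F) := ⟨y, rfl⟩
  exact ((Matrix.isUnit_iff_isUnit_det _).mp this).ne_zero

-- explicit upper triangular element
noncomputable def upperGL (a d : Fˣ) (c : F) : GL (Fin 2) F :=
  ⟨!![(a:F), c; 0, (d:F)], !![((a:F))⁻¹, -((a:F)⁻¹*c*((d:F))⁻¹); 0, ((d:F))⁻¹],
   by
    rw [Matrix.mul_fin_two]
    ext i j
    fin_cases i <;> fin_cases j <;>
      simp [Matrix.one_fin_two] <;> field_simp <;> ring,
   by
    rw [Matrix.mul_fin_two]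
    ext i j
    fin_cases i <;> fin_cases j <;>
      simp [Matrix.one_fin_two] <;> field_simp <;> ring⟩

@[simp] lemma upperGL_val (a d : Fˣ) (c : F) :
    (upperGL a d c : Matrix (Fin 2) (Fin 2) F) = !![(a:F), c; 0, (d:F)] := rfl

-- key relation: entries of u = y⁻¹ b y via y * u = b * y
lemma conj_rel (b y : GL (Fin 2) F) :
    (y : Matrix (Fin 2) (Fin 2) F) * ((y⁻¹*b*y : GL (Fin 2) F) : Matrix (Fin 2) (Fin 2) F)
      = (b : Matrix (Fin 2) (Fin 2) F) * (y : Matrix (Fin 2) (Fin 2) F) := by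
  have : y * (y⁻¹*b*y) = b * y := by group
  calc (y : Matrix (Fin 2) (Fin 2) F) * ((y⁻¹*b*y : GL (Fin 2) F) : Matrix (Fin 2) (Fin 2) F)
      = ((y * (y⁻¹*b*y) : GL (Fin 2) F) : Matrix (Fin 2) (Fin 2) F) := (Units.val_mul _ _).symm
    _ = _ := by rw [this]; rfl

open Matrix in
lemma entry_eq (b y : GL (Fin 2) F) (i j : Fin 2) :
    (y : Matrix (Fin 2) (Fin 2) F) i 0 * ((y⁻¹*b*y : GL (Fin 2) F) : Matrix (Fin 2) (Fin 2) F) 0 j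
    + (y : Matrix (Fin 2) (Fin 2) F) i 1 * ((y⁻¹*b*y : GL (Fin 2) F) : Matrix (Fin 2) (Fin 2) F) 1 j
    = (b : Matrix (Fin 2) (Fin 2) F) i 0 * (y : Matrix (Fin 2) (Fin 2) F) 0 j
    + (b : Matrix (Fin 2) (Fin 2) F) i 1 * (y : Matrix (Fin 2) (Fin 2) F) 1 j := by
  have h := conj_rel b y
  have h2 := congrFun (congrFun h i) j
  simpa [Matrix.mul_apply, Fin.sum_univ_two] using h2

-- Lemma A: conjugation by upper-triangular y of upper-triangular b
lemma lemA (a d : Fˣ) (c : F) (y : GL (Fin 2) F)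
    (hy : (y : Matrix (Fin 2) (Fin 2) F) 1 0 = 0) :
    ((y⁻¹ * upperGL a d c * y : GL (Fin 2) F) : Matrix (Fin 2) (Fin 2) F) 1 0 = 0 ∧
    ((y⁻¹ * upperGL a d c * y : GL (Fin 2) F) : Matrix (Fin 2) (Fin 2) F) 0 0 = a ∧
    ((y⁻¹ * upperGL a d c * y : GL (Fin 2) F) : Matrix (Fin 2) (Fin 2) F) 1 1 = d := by
  set u := ((y⁻¹ * upperGL a d c * y : GL (Fin 2) F) : Matrix (Fin 2) (Fin 2) F) with hu
  have hdet := gl_det_ne y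
  rw [Matrix.det_fin_two, hy] at hdet
  have hP : (y : Matrix (Fin 2) (Fin 2) F) 0 0 ≠ 0 := fun h => hdet (by rw [h]; ring)
  have hS : (y : Matrix (Fin 2) (Fin 2) F) 1 1 ≠ 0 := fun h => hdet (by rw [h]; ring)
  have e10 := entry_eq (upperGL a d c) y 1 0
  have e00 := entry_eq (upperGL a d c) y 0 0
  have e11 := entry_eq (upperGL a d c) y 1 1
  rw [upperGL_val, hy] at e10 e00 e11
  simp only [Matrix.of_apply, Matrix.cons_val', Matrix.cons_val_zero, Matrix.cons_val_one,
    Matrix.head_cons, Matrix.head_fin_const, Matrix.empty_val', Matrix.cons_val_fin_one,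
    zero_mul, mul_zero, add_zero, zero_add] at e10 e00 e11
  have h10 : u 1 0 = 0 := (mul_eq_zero.mp e10).resolve_left hS
  refine ⟨h10, ?_, ?_⟩
  · have h10' : ((y⁻¹ * upperGL a d c * y : GL (Fin 2) F) : Matrix (Fin 2) (Fin 2) F) 1 0 = 0 := h10
    rw [h10', mul_zero, add_zero] at e00
    exact mul_left_cancel₀ hP (e00.trans (mul_comm _ _))
  · exact mul_left_cancel₀ hS (e11.trans (mul_comm _ _))

-- Lemma B : if y is not in B ∪ g₀B then the conjugate is not upper triangular
lemma lemB (a d : Fˣ) (c : F) (y : GL (Fin 2) F)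
    (hR : (y : Matrix (Fin 2) (Fin 2) F) 1 0 ≠ 0)
    (hcond : ((d:F) - a) * (y : Matrix (Fin 2) (Fin 2) F) 0 0
      ≠ c * (y : Matrix (Fin 2) (Fin 2) F) 1 0) :
    ((y⁻¹ * upperGL a d c * y : GL (Fin 2) F) : Matrix (Fin 2) (Fin 2) F) 1 0 ≠ 0 := by
  intro h10
  have e10 := entry_eq (upperGL a d c) y 1 0
  have e00 := entry_eq (upperGL a d c) y 0 0
  rw [upperGL_val] at e10 e00
  simp only [Matrix.of_apply, Matrix.cons_val', Matrix.cons_val_zero, Matrix.cons_val_one,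
    Matrix.head_cons, Matrix.head_fin_const, Matrix.empty_val', Matrix.cons_val_fin_one,
    zero_mul, mul_zero, add_zero, zero_add] at e10 e00
  rw [h10, mul_zero, add_zero] at e10 e00
  -- e10 : y10 * u00 = d * y10 → u00 = d
  have hu00 : ((y⁻¹ * upperGL a d c * y : GL (Fin 2) F) : Matrix (Fin 2) (Fin 2) F) 0 0 = d :=
    mul_left_cancel₀ hR (e10.trans (mul_comm _ _))
  rw [hu00] at e00
  -- e00 : y00 * d = a * y00 + c * y10
  apply hcond
  linear_combination e00

noncomputable def wGL (a d : Fˣ) (c : F) (had : (d:F) - (a:F) ≠ 0) : GL (Fin 2) F :=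
  ⟨!![c, 1; (d:F) - (a:F), 0], !![0, ((d:F) - (a:F))⁻¹; 1, -(c * ((d:F) - (a:F))⁻¹)],
   by
    rw [Matrix.mul_fin_two]
    ext i j
    fin_cases i <;> fin_cases j <;> simp [Matrix.one_fin_two] <;> field_simp <;> ring,
   by
    rw [Matrix.mul_fin_two]
    ext i j
    fin_cases i <;> fin_cases j <;> simp [Matrix.one_fin_two] <;> field_simp <;> ring⟩

@[simp] lemma wGL_inv_val (a d : Fˣ) (c : F) (had : (d:F) - (a:F) ≠ 0) :
    (((wGL a d c had)⁻¹ : GL (Fin 2) F) : Matrix (Fin 2) (Fin 2) F)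
      = !![0, ((d:F) - (a:F))⁻¹; 1, -(c * ((d:F) - (a:F))⁻¹)] := rfl

lemma wGL_conj (a d : Fˣ) (c : F) (had : (d:F) - (a:F) ≠ 0) :
    (wGL a d c had)⁻¹ * upperGL a d c * wGL a d c had = upperGL d a 0 := by
  apply Units.ext
  rw [Units.val_mul, Units.val_mul, wGL_inv_val, upperGL_val, upperGL_val]
  show !![0, ((d:F) - (a:F))⁻¹; 1, -(c * ((d:F) - (a:F))⁻¹)] * !![(a:F), c; 0, (d:F)]
      * !![c, 1; (d:F) - (a:F), 0] = !![(d:F), 0; 0, (a:F)]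
  rw [Matrix.mul_fin_two, Matrix.mul_fin_two]
  ext i j
  fin_cases i <;> fin_cases j <;> simp <;> field_simp <;> ring

noncomputable def Fc (ν₁ ν₂ : MulChar F ℂ) (h : GL (Fin 2) F) : ℂ :=
  if (h : Matrix (Fin 2) (Fin 2) F) 1 0 = 0 then
    ν₁ ((h : Matrix (Fin 2) (Fin 2) F) 0 0) * ν₂ ((h : Matrix (Fin 2) (Fin 2) F) 1 1) else 0

lemma Fc_conj_of_triang (ν₁ ν₂ : MulChar F ℂ) (a d : Fˣ) (c : F) (y : GL (Fin 2) F)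
    (hy : (y : Matrix (Fin 2) (Fin 2) F) 1 0 = 0) :
    Fc ν₁ ν₂ (y⁻¹ * upperGL a d c * y) = ν₁ a * ν₂ d := by
  obtain ⟨h10, h00, h11⟩ := lemA a d c y hy
  rw [Fc, if_pos h10, h00, h11]

lemma point_split (ν₁ ν₂ : MulChar F ℂ) (a d : Fˣ) (c : F)
    (had : (d:F) - (a:F) ≠ 0) (y : GL (Fin 2) F) :
    Fc ν₁ ν₂ (y⁻¹ * upperGL a d c * y) =
      (if (y : Matrix (Fin 2) (Fin 2) F) 1 0 = 0 then ν₁ a * ν₂ d else 0)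
      + (if (((wGL a d c had)⁻¹ * y : GL (Fin 2) F) : Matrix (Fin 2) (Fin 2) F) 1 0 = 0
          then ν₁ d * ν₂ a else 0) := by
  have hw : (((wGL a d c had)⁻¹ * y : GL (Fin 2) F) : Matrix (Fin 2) (Fin 2) F) 1 0
      = (y : Matrix (Fin 2) (Fin 2) F) 0 0
        - c * ((d:F) - (a:F))⁻¹ * (y : Matrix (Fin 2) (Fin 2) F) 1 0 := by
    rw [Units.val_mul, wGL_inv_val]
    simp [Matrix.mul_apply, Fin.sum_univ_two]
    ring
  by_cases hR : (y : Matrix (Fin 2) (Fin 2) F) 1 0 = 0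
  · rw [if_pos hR, Fc_conj_of_triang ν₁ ν₂ a d c y hR]
    have hdet := gl_det_ne y
    rw [Matrix.det_fin_two, hR] at hdet
    have hP : (y : Matrix (Fin 2) (Fin 2) F) 0 0 ≠ 0 := fun h => hdet (by rw [h]; ring)
    rw [if_neg, add_zero]
    rw [hw, hR, mul_zero, sub_zero]
    exact hP
  · rw [if_neg hR, zero_add]
    by_cases hc : ((d:F) - (a:F)) * (y : Matrix (Fin 2) (Fin 2) F) 0 0
        = c * (y : Matrix (Fin 2) (Fin 2) F) 1 0
    · have hz : (((wGL a d c had)⁻¹ * y : GL (Fin 2) F) : Matrix (Fin 2) (Fin 2) F) 1 0 = 0 := by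
        rw [hw]
        field_simp
        linear_combination hc
      rw [if_pos hz]
      have key : y⁻¹ * upperGL a d c * y
          = ((wGL a d c had)⁻¹ * y)⁻¹ * upperGL d a 0 * ((wGL a d c had)⁻¹ * y) := by
        rw [← wGL_conj a d c had]
        group
      rw [key, Fc_conj_of_triang ν₁ ν₂ d a 0 _ hz]
    · have hz : (((wGL a d c had)⁻¹ * y : GL (Fin 2) F) : Matrix (Fin 2) (Fin 2) F) 1 0 ≠ 0 := by
        rw [hw]
        intro h
        apply hc
        have := mul_eq_zero_of_left h ((d:F) - (a:F))
        field_simp at h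
        linear_combination h
      rw [if_neg hz, Fc, if_neg (lemB a d c y hR hc)]

lemma point_uni (ν₁ ν₂ : MulChar F ℂ) (a : Fˣ) (c : F) (hc : c ≠ 0) (y : GL (Fin 2) F) :
    Fc ν₁ ν₂ (y⁻¹ * upperGL a a c * y) =
      (if (y : Matrix (Fin 2) (Fin 2) F) 1 0 = 0 then ν₁ a * ν₂ a else 0) := by
  by_cases hR : (y : Matrix (Fin 2) (Fin 2) F) 1 0 = 0
  · rw [if_pos hR, Fc_conj_of_triang ν₁ ν₂ a a c y hR]
  · rw [if_neg hR, Fc, if_neg]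
    apply lemB a a c y hR
    rw [sub_self, zero_mul]
    exact fun h => hR (by
      rcases mul_eq_zero.mp h.symm with h' | h'
      · exact absurd h' hc
      · exact h')

lemma central_comm (a : Fˣ) (y : GL (Fin 2) F) :
    y⁻¹ * upperGL a a 0 * y = upperGL a a 0 := by
  have hval : (upperGL a a (0:F) : Matrix (Fin 2) (Fin 2) F) = (a:F) • (1 : Matrix (Fin 2) (Fin 2) F) := by
    rw [upperGL_val]
    ext i j
    fin_cases i <;> fin_cases j <;> simp [Matrix.one_fin_two]
  have comm : upperGL a a 0 * y = y * upperGL a a 0 := by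
    apply Units.ext
    rw [Units.val_mul, Units.val_mul, hval, Matrix.smul_mul, Matrix.mul_smul, Matrix.one_mul,
      Matrix.mul_one]
  rw [mul_assoc, comm, ← mul_assoc, inv_mul_cancel, one_mul]

lemma point_central (ν₁ ν₂ : MulChar F ℂ) (a : Fˣ) (y : GL (Fin 2) F) :
    Fc ν₁ ν₂ (y⁻¹ * upperGL a a 0 * y) = ν₁ a * ν₂ a := by
  rw [central_comm]
  have : ((1 : GL (Fin 2) F))⁻¹ * upperGL a a 0 * 1 = upperGL a a 0 := by group
  rw [← this, Fc_conj_of_triang ν₁ ν₂ a a 0 1 (by simp)]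

noncomputable def cB (F : Type) [Field F] [Fintype F] [DecidableEq F] : ℂ :=
  (Nat.card {b : GL (Fin 2) F // (b : Matrix (Fin 2) (Fin 2) F) 1 0 = 0} : ℂ)

lemma sum_indicator_B (K : ℂ) :
    ∑ y : GL (Fin 2) F, (if (y : Matrix (Fin 2) (Fin 2) F) 1 0 = 0 then K else 0)
      = cB F * K := by
  rw [Finset.sum_ite, Finset.sum_const, Finset.sum_const_zero, add_zero, nsmul_eq_mul]
  congr 1
  rw [cB, Nat.card_eq_fintype_card, Fintype.card_subtype]

lemma sum_indicator_B' (w : GL (Fin 2) F) (K : ℂ) :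
    ∑ y : GL (Fin 2) F, (if ((w * y : GL (Fin 2) F) : Matrix (Fin 2) (Fin 2) F) 1 0 = 0 then K else 0)
      = cB F * K := by
  rw [← sum_indicator_B K]
  exact Fintype.sum_bijective (fun y => w * y) (Group.mulLeft_bijective w) _ _ (fun y => rfl)

noncomputable def Tfun (ν₁ ν₂ : MulChar F ℂ) (b : GL (Fin 2) F) : ℂ :=
  ∑ y : GL (Fin 2) F, Fc ν₁ ν₂ (y⁻¹ * b * y)

lemma T_split (ν₁ ν₂ : MulChar F ℂ) (a d : Fˣ) (c : F) (had : (d:F) - (a:F) ≠ 0) :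
    Tfun ν₁ ν₂ (upperGL a d c) = cB F * (ν₁ a * ν₂ d + ν₁ d * ν₂ a) := by
  rw [Tfun]
  calc ∑ y : GL (Fin 2) F, Fc ν₁ ν₂ (y⁻¹ * upperGL a d c * y)
      = ∑ y : GL (Fin 2) F,
        ((if (y : Matrix (Fin 2) (Fin 2) F) 1 0 = 0 then ν₁ a * ν₂ d else 0)
        + (if (((wGL a d c had)⁻¹ * y : GL (Fin 2) F) : Matrix (Fin 2) (Fin 2) F) 1 0 = 0
            then ν₁ d * ν₂ a else 0)) :=
        Finset.sum_congr rfl fun y _ => point_split ν₁ ν₂ a d c had y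
    _ = cB F * (ν₁ a * ν₂ d) + cB F * (ν₁ d * ν₂ a) := by
        rw [Finset.sum_add_distrib, sum_indicator_B, sum_indicator_B' ((wGL a d c had)⁻¹)]
    _ = _ := by ring

lemma T_uni (ν₁ ν₂ : MulChar F ℂ) (a : Fˣ) (c : F) (hc : c ≠ 0) :
    Tfun ν₁ ν₂ (upperGL a a c) = cB F * (ν₁ a * ν₂ a) := by
  rw [Tfun]
  rw [Finset.sum_congr rfl fun y _ => point_uni ν₁ ν₂ a c hc y, sum_indicator_B]

lemma T_central (ν₁ ν₂ : MulChar F ℂ) (a : Fˣ) :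
    Tfun ν₁ ν₂ (upperGL a a 0) = (Fintype.card (GL (Fin 2) F) : ℂ) * (ν₁ a * ν₂ a) := by
  rw [Tfun]
  rw [Finset.sum_congr rfl fun y _ => point_central ν₁ ν₂ a y, Finset.sum_const,
    nsmul_eq_mul, Finset.card_univ]

lemma psc_eq (μ₁ μ₂ : MulChar F ℂ) (g : GL (Fin 2) F) :
    principalSeriesChar μ₁ μ₂ g = (cB F)⁻¹ * ∑ x : GL (Fin 2) F, Fc μ₁ μ₂ (x⁻¹ * g * x) := by
  rw [principalSeriesChar, cB]
  simp only [Fc]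

lemma psc_conj (ν₁ ν₂ : MulChar F ℂ) (x g : GL (Fin 2) F) :
    principalSeriesChar ν₁ ν₂ (x * g * x⁻¹) = principalSeriesChar ν₁ ν₂ g := by
  rw [psc_eq, psc_eq]
  congr 1
  refine Fintype.sum_bijective (fun z => x⁻¹ * z) (Group.mulLeft_bijective x⁻¹) _ _ fun z => ?_
  congr 1
  group

lemma triple_sum (μ₁ μ₂ ν₁ ν₂ ρ₁ ρ₂ : MulChar F ℂ) :
    ∑ g : GL (Fin 2) F, principalSeriesChar μ₁ μ₂ g * principalSeriesChar ν₁ ν₂ g *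
        principalSeriesChar ρ₁ ρ₂ g
    = (Fintype.card (GL (Fin 2) F) : ℂ) * (cB F)⁻¹ *
        ∑ h : GL (Fin 2) F, Fc μ₁ μ₂ h * principalSeriesChar ν₁ ν₂ h *
          principalSeriesChar ρ₁ ρ₂ h := by
  have step1 : ∀ g : GL (Fin 2) F,
      principalSeriesChar μ₁ μ₂ g * principalSeriesChar ν₁ ν₂ g * principalSeriesChar ρ₁ ρ₂ g
      = (cB F)⁻¹ * ∑ x : GL (Fin 2) F,
          Fc μ₁ μ₂ (x⁻¹ * g * x) * principalSeriesChar ν₁ ν₂ g * principalSeriesChar ρ₁ ρ₂ g := by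
    intro g
    rw [psc_eq μ₁ μ₂ g, Finset.mul_sum, Finset.sum_mul, Finset.sum_mul, Finset.mul_sum]
    exact Finset.sum_congr rfl fun x _ => by ring
  rw [Finset.sum_congr rfl fun g _ => step1 g, ← Finset.mul_sum, Finset.sum_comm]
  have step2 : ∀ x : GL (Fin 2) F,
      (∑ g : GL (Fin 2) F, Fc μ₁ μ₂ (x⁻¹ * g * x) * principalSeriesChar ν₁ ν₂ g *
        principalSeriesChar ρ₁ ρ₂ g)
      = ∑ h : GL (Fin 2) F, Fc μ₁ μ₂ h * principalSeriesChar ν₁ ν₂ h *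
          principalSeriesChar ρ₁ ρ₂ h := by
    intro x
    refine Fintype.sum_bijective (fun h => x⁻¹ * h * x)
      (by
        have : (fun h : GL (Fin 2) F => x⁻¹ * h * x) = (fun h => h * x) ∘ (fun h => x⁻¹ * h) := by
          ext h; simp [mul_assoc]
        rw [this]
        exact (Group.mulRight_bijective x).comp (Group.mulLeft_bijective x⁻¹)) _ _ fun h => ?_
    have hν := psc_conj ν₁ ν₂ x⁻¹ h
    have hρ := psc_conj ρ₁ ρ₂ x⁻¹ h
    rw [inv_inv] at hν hρ
    rw [hν, hρ]
  rw [Finset.sum_congr rfl fun x _ => step2 x, Finset.sum_const, nsmul_eq_mul, Finset.card_univ]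
  ring

lemma upper_entries_ne (h : GL (Fin 2) F) (h10 : (h : Matrix (Fin 2) (Fin 2) F) 1 0 = 0) :
    (h : Matrix (Fin 2) (Fin 2) F) 0 0 ≠ 0 ∧ (h : Matrix (Fin 2) (Fin 2) F) 1 1 ≠ 0 := by
  have hdet := gl_det_ne h
  rw [Matrix.det_fin_two, h10] at hdet
  exact ⟨fun hh => hdet (by rw [hh]; ring), fun hh => hdet (by rw [hh]; ring)⟩

noncomputable def toParam (h : GL (Fin 2) F) : Fˣ × Fˣ × F :=
  (if h00 : (h : Matrix (Fin 2) (Fin 2) F) 0 0 = 0 then 1 else Units.mk0 _ h00,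
   if h11 : (h : Matrix (Fin 2) (Fin 2) F) 1 1 = 0 then 1 else Units.mk0 _ h11,
   (h : Matrix (Fin 2) (Fin 2) F) 0 1)

lemma upper_toParam (h : GL (Fin 2) F) (hh : (h : Matrix (Fin 2) (Fin 2) F) 1 0 = 0) :
    upperGL (toParam h).1 (toParam h).2.1 (toParam h).2.2 = h := by
  obtain ⟨h00, h11⟩ := upper_entries_ne h hh
  apply Units.ext
  rw [upperGL_val, toParam]
  rw [dif_neg h00, dif_neg h11]
  ext i j
  fin_cases i <;> fin_cases j <;> simp [hh]

lemma sum_over_B (f : GL (Fin 2) F → ℂ)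
    (hf : ∀ h : GL (Fin 2) F, (h : Matrix (Fin 2) (Fin 2) F) 1 0 ≠ 0 → f h = 0) :
    ∑ h : GL (Fin 2) F, f h = ∑ p : Fˣ × Fˣ × F, f (upperGL p.1 p.2.1 p.2.2) := by
  rw [← Finset.sum_filter_of_ne
    (p := fun h : GL (Fin 2) F => (h : Matrix (Fin 2) (Fin 2) F) 1 0 = 0)
    (fun x _ hx => by by_contra hc; exact hx (hf x hc))]
  refine Finset.sum_nbij' toParam (fun p => upperGL p.1 p.2.1 p.2.2) ?_ ?_ ?_ ?_ ?_
  · intro p _; exact Finset.mem_univ _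
  · intro p _
    simp only [Finset.mem_filter, Finset.mem_univ, true_and, upperGL_val]
    simp
  · intro h hh
    simp only [Finset.mem_filter, Finset.mem_univ, true_and] at hh
    exact upper_toParam h hh
  · intro p _
    obtain ⟨a, d, c⟩ := p
    rw [toParam]
    have h00 : (upperGL a d c : Matrix (Fin 2) (Fin 2) F) 0 0 = (a:F) := by
      rw [upperGL_val]; simp
    have h11 : (upperGL a d c : Matrix (Fin 2) (Fin 2) F) 1 1 = (d:F) := by
      rw [upperGL_val]; simp
    have h01 : (upperGL a d c : Matrix (Fin 2) (Fin 2) F) 0 1 = c := by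
      rw [upperGL_val]; simp
    rw [h00, h11, h01, dif_neg a.ne_zero, dif_neg d.ne_zero]
    exact Prod.ext (Units.ext rfl) (Prod.ext (Units.ext rfl) rfl)
  · intro h hh
    simp only [Finset.mem_filter, Finset.mem_univ, true_and] at hh
    rw [upper_toParam h hh]

lemma sum_char_units (χ : MulChar F ℂ) :
    ∑ u : Fˣ, χ (u:F) = if χ = 1 then (Fintype.card Fˣ : ℂ) else 0 := by
  split_ifs with h
  · subst h
    simp only [MulChar.one_apply_coe]
    rw [Finset.sum_const, nsmul_eq_mul, mul_one, Finset.card_univ]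
  · have h0 := MulChar.sum_eq_zero_of_ne_one h
    rw [← Finset.sum_filter_of_ne
      (p := fun a : F => IsUnit a)
      (fun x _ hx => by by_contra hc; exact hx (χ.map_nonunit hc))] at h0
    rw [← h0]
    refine Finset.sum_nbij' (fun u : Fˣ => (u : F))
      (fun a => if h : IsUnit a then h.unit else 1) ?_ ?_ ?_ ?_ ?_
    · intro u _
      simp [u.isUnit]
    · intro a _; exact Finset.mem_univ _
    · intro u _
      simp
    · intro a ha
      simp only [Finset.mem_filter, Finset.mem_univ, true_and] at ha
      simp only [dif_pos ha, IsUnit.unit_spec]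
    · intro u _; rfl

lemma Fc_upper (μ₁ μ₂ : MulChar F ℂ) (a d : Fˣ) (c : F) :
    Fc μ₁ μ₂ (upperGL a d c) = μ₁ a * μ₂ d := by
  rw [Fc, upperGL_val]
  simp

lemma cB_val : cB F = (Fintype.card F : ℂ) * (Fintype.card Fˣ : ℂ)^2 := by
  have h := sum_over_B (F := F)
    (fun h => if (h : Matrix (Fin 2) (Fin 2) F) 1 0 = 0 then (1:ℂ) else 0)
    (fun h hh => if_neg hh)
  rw [sum_indicator_B 1, mul_one] at h
  rw [h]
  have : ∀ p : Fˣ × Fˣ × F,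
      (if (upperGL p.1 p.2.1 p.2.2 : Matrix (Fin 2) (Fin 2) F) 1 0 = 0 then (1:ℂ) else 0) = 1 := by
    intro p
    rw [if_pos]
    rw [upperGL_val]
    simp
  rw [Finset.sum_congr rfl fun p _ => this p, Finset.sum_const, nsmul_eq_mul, mul_one,
    Finset.card_univ, Fintype.card_prod, Fintype.card_prod]
  push_cast
  ring

lemma cG_val : (Fintype.card (GL (Fin 2) F) : ℂ)
    = ((Fintype.card F : ℂ)^2 - 1) * ((Fintype.card F : ℂ)^2 - (Fintype.card F : ℂ)) := by
  have h := Matrix.card_GL_field (𝔽 := F) (n := 2)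
  rw [Nat.card_eq_fintype_card] at h
  rw [h, Fin.prod_univ_two]
  have h1 : (1:ℕ) ≤ Fintype.card F := Fintype.card_pos
  have h2 : Fintype.card F ^ (0:ℕ) ≤ Fintype.card F ^ 2 := Nat.pow_le_pow_right h1 (by norm_num)
  have h3 : Fintype.card F ^ (1:ℕ) ≤ Fintype.card F ^ 2 := Nat.pow_le_pow_right h1 (by norm_num)
  simp only [Fin.isValue, Fin.val_zero, Fin.val_one] at *
  rw [Nat.cast_mul, Nat.cast_sub h2, Nat.cast_sub h3]
  push_cast
  ring

lemma cardU_val : (Fintype.card Fˣ : ℂ) = (Fintype.card F : ℂ) - 1 := by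
  have h := Fintype.card_units (α := F)
  have h1 : (1:ℕ) ≤ Fintype.card F := Fintype.card_pos
  rw [h, Nat.cast_sub h1, Nat.cast_one]

lemma sum_char_units' (χ : MulChar F ℂ) [Decidable (χ = 1)] :
    ∑ u : Fˣ, χ (u:F) = (Fintype.card Fˣ : ℂ) * (if χ = 1 then 1 else 0) := by
  rw [sum_char_units]
  split_ifs <;> ring

open scoped Classical in
lemma S_val (μ₁ μ₂ ν₁ ν₂ ρ₁ ρ₂ : MulChar F ℂ) :
    ∑ h : GL (Fin 2) F, Fc μ₁ μ₂ h * (Tfun ν₁ ν₂ h * Tfun ρ₁ ρ₂ h)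
      = (cB F)^2 * (Fintype.card F : ℂ) * (Fintype.card Fˣ : ℂ)^2 *
          ((if μ₁ * ν₁ * ρ₁ = 1 then 1 else 0) * (if μ₂ * ν₂ * ρ₂ = 1 then 1 else 0)
           + (if μ₁ * ν₁ * ρ₂ = 1 then 1 else 0) * (if μ₂ * ν₂ * ρ₁ = 1 then 1 else 0)
           + (if μ₁ * ν₂ * ρ₁ = 1 then 1 else 0) * (if μ₂ * ν₁ * ρ₂ = 1 then 1 else 0)
           + (if μ₁ * ν₂ * ρ₂ = 1 then 1 else 0) * (if μ₂ * ν₁ * ρ₁ = 1 then 1 else 0))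
        + ((Fintype.card (GL (Fin 2) F) : ℂ)^2
            + (cB F)^2 * ((Fintype.card Fˣ : ℂ) - 4 * (Fintype.card F : ℂ)))
          * (Fintype.card Fˣ : ℂ) * (if μ₁ * ν₁ * ρ₁ * μ₂ * ν₂ * ρ₂ = 1 then 1 else 0) := by
  set Q : ℂ := (Fintype.card F : ℂ) with hQ
  set U : ℂ := (Fintype.card Fˣ : ℂ) with hU
  set cG : ℂ := (Fintype.card (GL (Fin 2) F) : ℂ) with hcG
  set X : Fˣ → ℂ := fun a => μ₁ a * μ₂ a * (ν₁ a * ν₂ a) * (ρ₁ a * ρ₂ a) with hX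
  set W : Fˣ → Fˣ → ℂ := fun a d =>
    μ₁ a * μ₂ d * ((ν₁ a * ν₂ d + ν₁ d * ν₂ a) * (ρ₁ a * ρ₂ d + ρ₁ d * ρ₂ a)) with hW
  -- Step 1: reduce to sum over the parametrized Borel
  rw [sum_over_B _ (fun h hh => by rw [Fc, if_neg hh, zero_mul])]
  -- Step 2: iterated sums
  rw [Fintype.sum_prod_type]
  have inner : ∀ a : Fˣ, ∑ p : Fˣ × F,
      Fc μ₁ μ₂ (upperGL a p.1 p.2) *
        (Tfun ν₁ ν₂ (upperGL a p.1 p.2) * Tfun ρ₁ ρ₂ (upperGL a p.1 p.2))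
      = ∑ d : Fˣ, (if a = d then (cG^2 + (Q - 1) * (cB F)^2) * X a else Q * (cB F)^2 * W a d) := by
    intro a
    rw [Fintype.sum_prod_type]
    refine Finset.sum_congr rfl fun d _ => ?_
    by_cases had : a = d
    · subst had
      rw [if_pos rfl]
      have hterm : ∀ c : F,
          Fc μ₁ μ₂ (upperGL a a c) * (Tfun ν₁ ν₂ (upperGL a a c) * Tfun ρ₁ ρ₂ (upperGL a a c))
          = (cB F)^2 * X a + (if c = 0 then cG^2 * X a - (cB F)^2 * X a else 0) := by
        intro c
        by_cases hc : c = 0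
        · subst hc
          rw [Fc_upper, T_central, T_central, if_pos rfl, hX]
          ring
        · rw [Fc_upper, T_uni ν₁ ν₂ a c hc, T_uni ρ₁ ρ₂ a c hc, if_neg hc, hX]
          ring
      rw [Finset.sum_congr rfl fun c _ => hterm c, Finset.sum_add_distrib, Finset.sum_const,
        Finset.sum_ite_eq' Finset.univ (0:F), if_pos (Finset.mem_univ _), nsmul_eq_mul,
        Finset.card_univ]
      ring
    · have had' : (d:F) - (a:F) ≠ 0 :=
        sub_ne_zero.mpr (fun h => had (Units.ext h.symm))
      rw [if_neg had]
      have hterm : ∀ c : F,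
          Fc μ₁ μ₂ (upperGL a d c) * (Tfun ν₁ ν₂ (upperGL a d c) * Tfun ρ₁ ρ₂ (upperGL a d c))
          = (cB F)^2 * W a d := by
        intro c
        rw [Fc_upper, T_split ν₁ ν₂ a d c had', T_split ρ₁ ρ₂ a d c had', hW]
        ring
      rw [Finset.sum_congr rfl fun c _ => hterm c, Finset.sum_const, nsmul_eq_mul,
        Finset.card_univ]
      ring
  rw [Finset.sum_congr rfl fun a _ => inner a]
  -- Step 3: split diagonal and off-diagonal
  have split : ∀ a : Fˣ, ∑ d : Fˣ,
      (if a = d then (cG^2 + (Q - 1) * (cB F)^2) * X a else Q * (cB F)^2 * W a d)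
      = (∑ d : Fˣ, Q * (cB F)^2 * W a d)
        + ((cG^2 + (Q - 1) * (cB F)^2) * X a - Q * (cB F)^2 * W a a) := by
    intro a
    have : ∀ d : Fˣ,
        (if a = d then (cG^2 + (Q - 1) * (cB F)^2) * X a else Q * (cB F)^2 * W a d)
        = Q * (cB F)^2 * W a d
          + (if d = a then (cG^2 + (Q - 1) * (cB F)^2) * X a - Q * (cB F)^2 * W a a else 0) := by
      intro d
      by_cases hd : a = d
      · subst hd; rw [if_pos rfl, if_pos rfl]; ring
      · rw [if_neg hd, if_neg (fun h => hd h.symm), add_zero]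
    rw [Finset.sum_congr rfl fun d _ => this d, Finset.sum_add_distrib,
      Finset.sum_ite_eq' Finset.univ a, if_pos (Finset.mem_univ _)]
  rw [Finset.sum_congr rfl fun a _ => split a, Finset.sum_add_distrib]
  -- Step 4: evaluate the two pieces
  have diag : ∑ a : Fˣ, ((cG^2 + (Q - 1) * (cB F)^2) * X a - Q * (cB F)^2 * W a a)
      = (cG^2 + (cB F)^2 * (U - 4*Q)) * U * (if μ₁ * ν₁ * ρ₁ * μ₂ * ν₂ * ρ₂ = 1 then 1 else 0) := by
    have hXa : ∀ a : Fˣ, (cG^2 + (Q - 1) * (cB F)^2) * X a - Q * (cB F)^2 * W a a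
        = (cG^2 + (Q - 1) * (cB F)^2 - 4 * Q * (cB F)^2) *
            ((μ₁ * ν₁ * ρ₁ * μ₂ * ν₂ * ρ₂) a) := by
      intro a
      simp only [MulChar.mul_apply, hX, hW]
      ring
    rw [Finset.sum_congr rfl fun a _ => hXa a, ← Finset.mul_sum,
      sum_char_units' (μ₁ * ν₁ * ρ₁ * μ₂ * ν₂ * ρ₂)]
    simp only [← hU]
    have hUQ : U = Q - 1 := cardU_val
    rw [hUQ]
    ring
  have offdiag : ∑ a : Fˣ, ∑ d : Fˣ, Q * (cB F)^2 * W a d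
      = (cB F)^2 * Q * U^2 *
          ((if μ₁ * ν₁ * ρ₁ = 1 then 1 else 0) * (if μ₂ * ν₂ * ρ₂ = 1 then 1 else 0)
           + (if μ₁ * ν₁ * ρ₂ = 1 then 1 else 0) * (if μ₂ * ν₂ * ρ₁ = 1 then 1 else 0)
           + (if μ₁ * ν₂ * ρ₁ = 1 then 1 else 0) * (if μ₂ * ν₁ * ρ₂ = 1 then 1 else 0)
           + (if μ₁ * ν₂ * ρ₂ = 1 then 1 else 0) * (if μ₂ * ν₁ * ρ₁ = 1 then 1 else 0)) := by
    have hinner : ∀ a : Fˣ, ∑ d : Fˣ, Q * (cB F)^2 * W a d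
        = Q * (cB F)^2 *
            ((μ₁ * ν₁ * ρ₁) a * ∑ d : Fˣ, (μ₂ * ν₂ * ρ₂) d
             + (μ₁ * ν₁ * ρ₂) a * ∑ d : Fˣ, (μ₂ * ν₂ * ρ₁) d
             + (μ₁ * ν₂ * ρ₁) a * ∑ d : Fˣ, (μ₂ * ν₁ * ρ₂) d
             + (μ₁ * ν₂ * ρ₂) a * ∑ d : Fˣ, (μ₂ * ν₁ * ρ₁) d) := by
      intro a
      rw [← Finset.mul_sum]
      congr 1
      rw [Finset.mul_sum, Finset.mul_sum, Finset.mul_sum, Finset.mul_sum,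
        ← Finset.sum_add_distrib, ← Finset.sum_add_distrib, ← Finset.sum_add_distrib]
      refine Finset.sum_congr rfl fun d _ => ?_
      simp only [MulChar.mul_apply, hW]
      ring
    rw [Finset.sum_congr rfl fun a _ => hinner a]
    rw [sum_char_units' (μ₂ * ν₂ * ρ₂), sum_char_units' (μ₂ * ν₂ * ρ₁),
      sum_char_units' (μ₂ * ν₁ * ρ₂), sum_char_units' (μ₂ * ν₁ * ρ₁)]
    have expand : ∀ a : Fˣ, Q * (cB F)^2 *
        ((μ₁ * ν₁ * ρ₁) a * (U * (if μ₂ * ν₂ * ρ₂ = 1 then 1 else 0))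
         + (μ₁ * ν₁ * ρ₂) a * (U * (if μ₂ * ν₂ * ρ₁ = 1 then 1 else 0))
         + (μ₁ * ν₂ * ρ₁) a * (U * (if μ₂ * ν₁ * ρ₂ = 1 then 1 else 0))
         + (μ₁ * ν₂ * ρ₂) a * (U * (if μ₂ * ν₁ * ρ₁ = 1 then 1 else 0)))
        = Q * (cB F)^2 * U * (if μ₂ * ν₂ * ρ₂ = 1 then 1 else 0) * (μ₁ * ν₁ * ρ₁) a
          + Q * (cB F)^2 * U * (if μ₂ * ν₂ * ρ₁ = 1 then 1 else 0) * (μ₁ * ν₁ * ρ₂) a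
          + Q * (cB F)^2 * U * (if μ₂ * ν₁ * ρ₂ = 1 then 1 else 0) * (μ₁ * ν₂ * ρ₁) a
          + Q * (cB F)^2 * U * (if μ₂ * ν₁ * ρ₁ = 1 then 1 else 0) * (μ₁ * ν₂ * ρ₂) a := by
      intro a; ring
    rw [Finset.sum_congr rfl fun a _ => expand a, Finset.sum_add_distrib,
      Finset.sum_add_distrib, Finset.sum_add_distrib,
      ← Finset.mul_sum, ← Finset.mul_sum, ← Finset.mul_sum, ← Finset.mul_sum,
      sum_char_units' (μ₁ * ν₁ * ρ₁), sum_char_units' (μ₁ * ν₁ * ρ₂),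
      sum_char_units' (μ₁ * ν₂ * ρ₁), sum_char_units' (μ₁ * ν₂ * ρ₂)]
    simp only [← hU]
    ring
  rw [diag, offdiag]


open scoped Classical in
/-- Triple-product multiplicity formula for principal series of `GL(2,𝔽_q)`:
`⟨I(μ₁,μ₂) I(ν₁,ν₂) I(ρ₁,ρ₂)⟩ = δ(μ₁ν₁ρ₁μ₂ν₂ρ₂) + δ(μ₁ν₁ρ₁)δ(μ₂ν₂ρ₂)
 + δ(μ₂ν₁ρ₁)δ(μ₁ν₂ρ₂) + δ(μ₁ν₂ρ₁)δ(μ₂ν₁ρ₂) + δ(μ₁ν₁ρ₂)δ(μ₂ν₂ρ₁)`. -/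
theorem stmt_18 {F : Type} [Field F] [Fintype F] [DecidableEq F]
    (μ₁ μ₂ ν₁ ν₂ ρ₁ ρ₂ : MulChar F ℂ)
    (hμ : μ₁ ≠ μ₂) (hν : ν₁ ≠ ν₂) (hρ : ρ₁ ≠ ρ₂) :
    (Fintype.card (GL (Fin 2) F) : ℂ)⁻¹ *
      ∑ g : GL (Fin 2) F,
        principalSeriesChar μ₁ μ₂ g * principalSeriesChar ν₁ ν₂ g *
          principalSeriesChar ρ₁ ρ₂ g
      = (if μ₁ * ν₁ * ρ₁ * μ₂ * ν₂ * ρ₂ = 1 then 1 else 0)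
        + (if μ₁ * ν₁ * ρ₁ = 1 then 1 else 0) * (if μ₂ * ν₂ * ρ₂ = 1 then 1 else 0)
        + (if μ₂ * ν₁ * ρ₁ = 1 then 1 else 0) * (if μ₁ * ν₂ * ρ₂ = 1 then 1 else 0)
        + (if μ₁ * ν₂ * ρ₁ = 1 then 1 else 0) * (if μ₂ * ν₁ * ρ₂ = 1 then 1 else 0)
        + (if μ₁ * ν₁ * ρ₂ = 1 then 1 else 0) * (if μ₂ * ν₂ * ρ₁ = 1 then 1 else 0) := by
  have hQ0 : (Fintype.card F : ℂ) ≠ 0 := Nat.cast_ne_zero.mpr Fintype.card_ne_zero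
  have hU0 : (Fintype.card Fˣ : ℂ) ≠ 0 := Nat.cast_ne_zero.mpr Fintype.card_ne_zero
  have hB0 : cB F ≠ 0 := by
    rw [cB_val]
    exact mul_ne_zero hQ0 (pow_ne_zero 2 hU0)
  have hG0 : (Fintype.card (GL (Fin 2) F) : ℂ) ≠ 0 := Nat.cast_ne_zero.mpr Fintype.card_ne_zero
  have psc_T : ∀ (ν₁ ν₂ : MulChar F ℂ) (h : GL (Fin 2) F),
      principalSeriesChar ν₁ ν₂ h = (cB F)⁻¹ * Tfun ν₁ ν₂ h := fun ν₁ ν₂ h => psc_eq ν₁ ν₂ h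
  rw [triple_sum μ₁ μ₂ ν₁ ν₂ ρ₁ ρ₂]
  have h2 : ∑ h : GL (Fin 2) F, Fc μ₁ μ₂ h * principalSeriesChar ν₁ ν₂ h *
        principalSeriesChar ρ₁ ρ₂ h
      = (cB F)⁻¹ * ((cB F)⁻¹ *
          ∑ h : GL (Fin 2) F, Fc μ₁ μ₂ h * (Tfun ν₁ ν₂ h * Tfun ρ₁ ρ₂ h)) := by
    rw [Finset.mul_sum, Finset.mul_sum]
    refine Finset.sum_congr rfl fun h _ => ?_
    rw [psc_T ν₁ ν₂ h, psc_T ρ₁ ρ₂ h]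
    ring
  rw [h2, S_val μ₁ μ₂ ν₁ ν₂ ρ₁ ρ₂]
  have h1 : ((Fintype.card F : ℂ) - 1) ≠ 0 := by
    rw [← cardU_val]; exact hU0
  have key : ∀ s t : ℂ, (Fintype.card (GL (Fin 2) F) : ℂ)⁻¹ *
      ((Fintype.card (GL (Fin 2) F) : ℂ) * (cB F)⁻¹ * ((cB F)⁻¹ * ((cB F)⁻¹ *
        ((cB F)^2 * (Fintype.card F : ℂ) * (Fintype.card Fˣ : ℂ)^2 * s
          + ((Fintype.card (GL (Fin 2) F) : ℂ)^2
              + (cB F)^2 * ((Fintype.card Fˣ : ℂ) - 4 * (Fintype.card F : ℂ)))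
            * (Fintype.card Fˣ : ℂ) * t)))) = s + t := by
    intro s t
    have e : ∀ b g C1 C2 : ℂ, b ≠ 0 → g ≠ 0 → C1 = b^3 → C2 = b^3 →
        g⁻¹ * (g * b⁻¹ * (b⁻¹ * (b⁻¹ * (C1 * s + C2 * t)))) = s + t := by
      intro b g C1 C2 hb hg hc1 hc2
      subst hc1; subst hc2
      field_simp
    rw [cB_val, cG_val, cardU_val]
    have hB : (Fintype.card F : ℂ) * ((Fintype.card F : ℂ) - 1)^2 ≠ 0 :=
      mul_ne_zero hQ0 (pow_ne_zero 2 h1)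
    have hG' : ((Fintype.card F : ℂ)^2 - 1) * ((Fintype.card F : ℂ)^2 - (Fintype.card F : ℂ)) ≠ 0 := by
      rw [← cG_val]; exact hG0
    exact e _ _ _ _ hB hG' (by ring) (by ring)
  rw [key]
  ring
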